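/- If D is a strongly connected digraph with fewer than g(D)+2 vertices, where g(D) is the girth of D, then D is not λ'-connected, i.e., D has no restricted arc-cut. -/

import Mathlib

/-- A digraph on vertex type `V`, given by its adjacency (arc) relation. -/
structure Digr (V : Type) where
  Adj : V → V → Prop

namespace Digr

variable {V : Type}

/-- Reachability by directed paths. -/
def Reach (D : Digr V) : V → V → Prop := Relation.ReflTransGen D.Adj

/-- A digraph is strongly connected if every vertex reaches every other. -/
def StronglyConnected (D : Digr V) : Prop := ∀ u v : V, D.Reach u v

/-- An oriented graph: no loops and no pair of opposite arcs. -/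
def Oriented (D : Digr V) : Prop := ∀ u v : V, D.Adj u v → ¬ D.Adj v u

/-- The digraph contains at least one arc. -/
def HasArc (D : Digr V) : Prop := ∃ u v : V, D.Adj u v

/-- Delete a set of arcs. -/
def delArcs (D : Digr V) (S : Set (V × V)) : Digr V :=
  ⟨fun a b => D.Adj a b ∧ (a, b) ∉ S⟩

/-- Delete a set of vertices (keep arcs avoiding them). -/
def delVerts (D : Digr V) (X : Set V) : Digr V :=
  ⟨fun a b => D.Adj a b ∧ a ∉ X ∧ b ∉ X⟩

/-- Induced subdigraph on a vertex set. -/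
def induce (D : Digr V) (X : Set V) : Digr V :=
  ⟨fun a b => a ∈ X ∧ b ∈ X ∧ D.Adj a b⟩

/-- The induced subdigraph on `X` is strongly connected. -/
def StronglyConnectedOn (D : Digr V) (X : Set V) : Prop :=
  ∀ u ∈ X, ∀ v ∈ X, (D.induce X).Reach u v

/-- Mutual reachability. -/
def MReach (D : Digr V) (u v : V) : Prop := D.Reach u v ∧ D.Reach v u

/-- `X` is a strong component: an equivalence class of mutual reachability. -/
def IsStrongComponent (D : Digr V) (X : Set V) : Prop :=
  ∃ x : V, X = {y | D.MReach x y}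

/-- `S` is a restricted arc-cut: a set of arcs whose deletion leaves a
non-trivial strong component `X` (containing an arc) such that deleting the
vertices of `X` from `D` leaves an arc. -/
def IsRestrictedArcCut (D : Digr V) (S : Set (V × V)) : Prop :=
  (∀ p ∈ S, D.Adj p.1 p.2) ∧
  ∃ X : Set V, (D.delArcs S).IsStrongComponent X ∧
    (∃ u ∈ X, ∃ v ∈ X, (D.delArcs S).Adj u v) ∧
    (D.delVerts X).HasArc

/-- A digraph is λ'-connected if it admits a restricted arc-cut. -/
def LambdaPrimeConnected (D : Digr V) : Prop :=
  ∃ S : Set (V × V), D.IsRestrictedArcCut S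

/-- λ'(D): minimum size of a restricted arc-cut. -/
noncomputable def lambdaPrime (D : Digr V) [Fintype V] : ℕ :=
  sInf {n : ℕ | ∃ S : Finset (V × V), D.IsRestrictedArcCut ↑S ∧ S.card = n}

/-- λ(D): the arc-connectivity, the minimum size of an arc set whose removal
destroys strong connectivity. -/
noncomputable def lambda (D : Digr V) [Fintype V] : ℕ :=
  sInf {n : ℕ | ∃ S : Finset (V × V), (∀ p ∈ S, D.Adj p.1 p.2) ∧
    ¬ (D.delArcs ↑S).StronglyConnected ∧ S.card = n}

/-- The list `l` of distinct vertices forms a directed cycle. -/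
def IsCycleList (D : Digr V) (l : List V) : Prop :=
  ∃ h : l ≠ [], l.Nodup ∧ l.Chain' D.Adj ∧ D.Adj (l.getLast h) (l.head h)

/-- The girth: minimum length of a directed cycle. -/
noncomputable def girth (D : Digr V) : ℕ :=
  sInf {n : ℕ | ∃ l : List V, D.IsCycleList l ∧ l.length = n}

/-- `(u,v,w,z,u)` is a 4-cycle of `D`. -/
def Cycle4 (D : Digr V) (u v w z : V) : Prop := D.IsCycleList [u, v, w, z]

/-- Out-degree. -/
def outDeg (D : Digr V) [Fintype V] [DecidableRel D.Adj] (v : V) : ℕ :=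
  (Finset.univ.filter fun w => D.Adj v w).card

/-- In-degree. -/
def inDeg (D : Digr V) [Fintype V] [DecidableRel D.Adj] (v : V) : ℕ :=
  (Finset.univ.filter fun w => D.Adj w v).card

/-- ξ(D): minimum over girth cycles `C` of
`min (Σ d⁺ − g, Σ d⁻ − g)`. -/
noncomputable def xi (D : Digr V) [Fintype V] [DecidableRel D.Adj] : ℤ :=
  sInf {k : ℤ | ∃ l : List V, D.IsCycleList l ∧ l.length = D.girth ∧
    k = min (((l.map D.outDeg).sum : ℤ) - (D.girth : ℤ))
            (((l.map D.inDeg).sum : ℤ) - (D.girth : ℤ))}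

/-- ∂⁺(X): the set of arcs from `X` to its complement. -/
noncomputable def outBoundary (D : Digr V) [Fintype V] (X : Set V) : Finset (V × V) :=
  (Set.toFinite {p : V × V | p.1 ∈ X ∧ p.2 ∉ X ∧ D.Adj p.1 p.2}).toFinset

/-- ∂⁻(X): the set of arcs from the complement of `X` into `X`. -/
noncomputable def inBoundary (D : Digr V) [Fintype V] (X : Set V) : Finset (V × V) :=
  (Set.toFinite {p : V × V | p.1 ∉ X ∧ p.2 ∈ X ∧ D.Adj p.1 p.2}).toFinset

/-- The list of arcs of a cycle given as a vertex list. -/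
def cycleArcs (l : List V) : List (V × V) := l.zip (l.rotate 1)

end Digr
section Helpers
open List

lemma dup_decomp {α : Type*} : ∀ l : List α, ¬ l.Nodup →
    ∃ (a : α) (l₁ l₂ l₃ : List α), l = l₁ ++ a :: l₂ ++ a :: l₃ := by
  intro l
  induction l with
  | nil => intro h; exact absurd nodup_nil h
  | cons b t ih =>
    intro h
    rw [nodup_cons] at h
    push_neg at h
    by_cases hb : b ∈ t
    · obtain ⟨s, t', rfl⟩ := append_of_mem hb
      exact ⟨b, [], s, t', by simp⟩
    · obtain ⟨a, l₁, l₂, l₃, rfl⟩ := ih (h hb)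
      exact ⟨a, b :: l₁, l₂, l₃, by simp⟩

lemma extract_cycle {α : Type*} {R : α → α → Prop} :
    ∀ n (L : List α), L.length ≤ n → ∀ (hL : L ≠ []), L.Chain' R →
      R (L.getLast hL) (L.head hL) →
      ∃ (M : List α) (hM : M ≠ []), M.Nodup ∧ M.Chain' R ∧
        R (M.getLast hM) (M.head hM) ∧ ∀ x ∈ M, x ∈ L := by
  intro n
  induction n with
  | zero => intro L hlen hL; simp [length_eq_zero_iff.mp (Nat.le_zero.mp hlen)] at hL
  | succ n ih =>
    intro L hlen hL hch hcl
    by_cases hnd : L.Nodup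
    · exact ⟨L, hL, hnd, hch, hcl, fun x hx => hx⟩
    · obtain ⟨a, l₁, l₂, l₃, rfl⟩ := dup_decomp L hnd
      -- the sublist a :: l₂ is a closed walk
      have hinf : (a :: l₂ ++ [a]) <:+: (l₁ ++ a :: l₂ ++ a :: l₃) :=
        ⟨l₁, l₃, by simp⟩
      have hch2 : (a :: l₂ ++ [a]).Chain' R := hch.infix hinf
      have hch3 : (a :: l₂).Chain' R := hch2.prefix ⟨[a], rfl⟩
      have hcl3 : R ((a :: l₂).getLast (cons_ne_nil _ _)) a := by
        have := isChain_append.mp hch2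
        exact this.2.2 _ (by simp [getLast?_eq_getLast]) a rfl
      have hlen3 : (a :: l₂).length ≤ n := by
        simp only [length_append, length_cons] at hlen ⊢
        omega
      obtain ⟨M, hM, h1, h2, h3, h4⟩ := ih (a :: l₂) hlen3 (cons_ne_nil _ _) hch3
        (by simpa using hcl3)
      exact ⟨M, hM, h1, h2, h3, fun x hx => by
        have := h4 x hx; simp at this ⊢; tauto⟩

lemma chain_reach {α : Type*} {R : α → α → Prop} :
    ∀ (l : List α) (v : α), Chain R v l →
      ∀ x ∈ v :: l, Relation.ReflTransGen R v x ∧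
        Relation.ReflTransGen R x ((v :: l).getLast (cons_ne_nil _ _)) := by
  intro l
  induction l with
  | nil => intro v _ x hx; simp at hx; subst hx; simp [Relation.ReflTransGen.refl]
  | cons b t ih =>
    intro v hch x hx
    replace hch : R v b ∧ Chain R b t := isChain_cons_cons.mp hch
    rw [getLast_cons_cons]
    rcases mem_cons.mp hx with rfl | hx
    · refine ⟨Relation.ReflTransGen.refl, ?_⟩
      exact Relation.ReflTransGen.head hch.1 (ih b hch.2 b mem_cons_self).2
    · obtain ⟨h1, h2⟩ := ih b hch.2 x hx
      exact ⟨Relation.ReflTransGen.head hch.1 h1, h2⟩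

end Helpers
/-- A strongly connected oriented digraph with fewer than
`girth + 2` vertices is not λ'-connected. -/
theorem stmt0 {V : Type} [Fintype V] (D : Digr V) (hO : D.Oriented)
    (hS : D.StronglyConnected) (h : Fintype.card V < D.girth + 2) :
    ¬ D.LambdaPrimeConnected := by
  rintro ⟨S, hSadj, X, ⟨x₀, hX⟩, ⟨u, hu, v, hv, huv⟩, a, b, hab, haX, hbX⟩
  set D' := D.delArcs S with hD'
  rw [hX] at hu hv
  -- u, v mutually reachable with x₀ in D'
  have hvu : D'.Reach v u := hv.2.trans hu.1
  obtain ⟨l, hch, hlast⟩ := List.exists_isChain_cons_of_relationReflTransGen hvu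
  have hch' : (v :: l).Chain' D'.Adj := hch
  have hcl : D'.Adj ((v :: l).getLast (List.cons_ne_nil _ _)) ((v :: l).head (List.cons_ne_nil _ _)) := by
    rw [hlast]; exact huv
  obtain ⟨M, hM, hnd, hMch, hMcl, hMmem⟩ :=
    extract_cycle (R := D'.Adj) (v :: l).length (v :: l) le_rfl (List.cons_ne_nil _ _) hch' hcl
  -- M is a cycle of D
  have hcycD : D.IsCycleList M := by
    refine ⟨hM, hnd, hMch.imp (fun _ _ h => h.1), (hMcl).1⟩
  have hgirth : D.girth ≤ M.length := Nat.sInf_le ⟨M, hcycD, rfl⟩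
  -- every vertex of M lies in X
  have hreach := chain_reach (R := D'.Adj) l v hch
  have hMX : ∀ x ∈ M, x ∈ X := by
    intro x hx
    obtain ⟨h1, h2⟩ := hreach x (hMmem x hx)
    rw [hlast] at h2
    rw [hX]
    exact ⟨hv.1.trans h1, (h2.trans (Relation.ReflTransGen.single huv)).trans hv.2⟩
  -- a ≠ b, a ∉ X, b ∉ X
  have hne : a ≠ b := by
    rintro rfl
    exact hO a a hab hab
  -- counting
  classical
  have key : M.length + 2 ≤ Fintype.card V := by
    set Xf : Finset V := Finset.univ.filter (· ∈ X) with hXf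
    have hsub : M.toFinset ⊆ Xf := by
      intro x hx
      simp only [hXf, Finset.mem_filter, Finset.mem_univ, true_and]
      exact hMX x (List.mem_toFinset.mp hx)
    have hlen : M.length = M.toFinset.card := (List.toFinset_card_of_nodup hnd).symm
    have haXf : a ∉ Xf := by simp [hXf, haX]
    have hbXf : b ∉ Xf := by simp [hXf, hbX]
    have hcard : Xf.card + 2 ≤ Fintype.card V := by
      have h2 : (insert a (insert b Xf)).card = Xf.card + 2 := by
        rw [Finset.card_insert_of_notMem (by simp [hne, haXf]),
          Finset.card_insert_of_notMem hbXf]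
      calc Xf.card + 2 = (insert a (insert b Xf)).card := h2.symm
        _ ≤ Finset.univ.card := Finset.card_le_card (Finset.subset_univ _)
        _ = Fintype.card V := rfl
    have := Finset.card_le_card hsub
    omega
  omega
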